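/- Let X and Y be disjoint finite sets of vertices of a complete graph whose edges are each colored red or blue, and let 0 < p < 1. Define f_p(X,Y) = e_R(X,Y) - p|X||Y|, where e_R(X,Y) is the number of red edges with one end in X and the other in Y. Then the sum over v in X of f_p(X, N_R(v) ∩ Y) is at least p|X| · f_p(X,Y), where N_R(v) denotes the set of vertices joined to v by a red edge. -/
import Mathlib


open Finset

/-- Number of red edges between `X` and `Y`. -/
def eR {V : Type*} [DecidableEq V] (red : SimpleGraph V) [DecidableRel red.Adj]
    (X Y : Finset V) : ℕ :=
  ((X ×ˢ Y).filter fun e => red.Adj e.1 e.2).card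

/-- Red neighborhood of `v`. -/
def NR {V : Type*} [Fintype V] (red : SimpleGraph V) [DecidableRel red.Adj] (v : V) :
    Finset V :=
  Finset.univ.filter fun u => red.Adj v u

/-- `f_p(X,Y) = e_R(X,Y) - p|X||Y|`. -/
noncomputable def fp {V : Type*} [DecidableEq V] (red : SimpleGraph V) [DecidableRel red.Adj]
    (p : ℝ) (X Y : Finset V) : ℝ :=
  (eR red X Y : ℝ) - p * X.card * Y.card

lemma eR_eq_sum {V : Type*} [DecidableEq V] (red : SimpleGraph V) [DecidableRel red.Adj]
    (X Z : Finset V) : eR red X Z = ∑ y ∈ Z, (X.filter fun x => red.Adj x y).card := by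
  rw [eR, Finset.card_filter, Finset.sum_product]
  rw [Finset.sum_comm]
  exact Finset.sum_congr rfl fun y _ => (Finset.card_filter _ _).symm

lemma NR_inter {V : Type*} [Fintype V] [DecidableEq V] (red : SimpleGraph V)
    [DecidableRel red.Adj] (v : V) (Y : Finset V) :
    NR red v ∩ Y = Y.filter fun y => red.Adj v y := by
  ext y; simp [NR, Finset.mem_filter, and_comm]

theorem stmt0 {V : Type*} [Fintype V] [DecidableEq V]
    (red : SimpleGraph V) [DecidableRel red.Adj]
    (X Y : Finset V) (hXY : Disjoint X Y) (p : ℝ) (hp0 : 0 < p) (hp1 : p < 1) :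
    ∑ v ∈ X, fp red p X (NR red v ∩ Y) ≥ p * X.card * fp red p X Y := by
  set d : V → ℕ := fun y => (X.filter fun x => red.Adj x y).card with hd
  have h1 : ∀ v, eR red X (NR red v ∩ Y) = ∑ y ∈ Y, if red.Adj v y then d y else 0 := by
    intro v
    rw [eR_eq_sum, NR_inter, Finset.sum_filter]
  have h2 : ∀ v, (NR red v ∩ Y).card = ∑ y ∈ Y, if red.Adj v y then 1 else 0 := by
    intro v
    rw [NR_inter, Finset.card_filter]
  have hS2 : ∑ v ∈ X, (eR red X (NR red v ∩ Y) : ℝ) = ∑ y ∈ Y, ((d y : ℝ))^2 := by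
    push_cast [h1]
    rw [Finset.sum_comm]
    refine Finset.sum_congr rfl fun y _ => ?_
    rw [← Finset.sum_filter, Finset.sum_const, nsmul_eq_mul]
    simp [hd, sq]
  have hS1 : ∑ v ∈ X, ((NR red v ∩ Y).card : ℝ) = ∑ y ∈ Y, (d y : ℝ) := by
    push_cast [h2]
    rw [Finset.sum_comm]
    refine Finset.sum_congr rfl fun y _ => ?_
    rw [← Finset.sum_filter, Finset.sum_const, nsmul_eq_mul]
    simp [hd]
  have hE : (eR red X Y : ℝ) = ∑ y ∈ Y, (d y : ℝ) := by
    rw [eR_eq_sum]; push_cast; rfl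
  have hsq : (0:ℝ) ≤ ∑ y ∈ Y, ((d y : ℝ) - p * X.card)^2 :=
    Finset.sum_nonneg fun y _ => sq_nonneg _
  have hexp : ∑ y ∈ Y, ((d y : ℝ) - p * X.card)^2
      = ∑ y ∈ Y, (d y : ℝ)^2 - 2 * (p * X.card) * (∑ y ∈ Y, (d y : ℝ))
        + Y.card * (p * X.card)^2 := by
    simp only [sub_sq]
    rw [Finset.sum_add_distrib, Finset.sum_sub_distrib, ← Finset.sum_mul, ← Finset.mul_sum,
      Finset.sum_const, nsmul_eq_mul]
    ring
  simp only [fp]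
  rw [Finset.sum_sub_distrib]
  have : ∑ v ∈ X, p * X.card * (NR red v ∩ Y).card = p * X.card * ∑ y ∈ Y, (d y : ℝ) := by
    rw [← hS1, Finset.mul_sum]
  rw [hS2, this, hE]
  nlinarith [hsq, hexp]
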